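/- Let P = {x ∈ ℝ^n : Ax ≤ b} be a bounded polyhedron given by A ∈ ℝ^{m×n} and b ∈ ℝ^m, let W : ℝ^n → ℝ^d be a linear map, and let u be an extreme point of the image polytope W(P). For each row index 1 ≤ i ≤ m, define z_i := min { A_{i·}x : x ∈ P, Wx = u }. Then the fiber of u satisfies (W^{-1}u) ∩ P = { x ∈ ℝ^n : A_{i·}x ≤ b_i for every i with z_i < b_i, and A_{i·}x = b_i for every i with z_i = b_i }. -/

import Mathlib

/-- Inequality description of the fiber of an extreme point `u` of `W(P)`, where
`P = {x | Ax ≤ b}` is a bounded polyhedron: the fiber is the face of `P` obtained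
by turning into equalities exactly those inequalities `A_{i·}x ≤ b_i` whose
minimum `z_i` over the fiber equals `b_i`. -/
theorem fiber_inequality_description
    (m n d : ℕ) (A : Matrix (Fin m) (Fin n) ℝ) (b : Fin m → ℝ)
    (P : Set (Fin n → ℝ)) (hP : P = {x | ∀ i, A.mulVec x i ≤ b i})
    (hbdd : Bornology.IsBounded P)
    (W : (Fin n → ℝ) →ₗ[ℝ] (Fin d → ℝ)) (u : Fin d → ℝ)
    (hu : u ∈ (W '' P).extremePoints ℝ)
    (z : Fin m → ℝ)
    (hz : ∀ i, IsLeast {y | ∃ x ∈ P, W x = u ∧ A.mulVec x i = y} (z i)) :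
    {x | W x = u} ∩ P =
      {x | ∀ i, (z i < b i → A.mulVec x i ≤ b i) ∧ (z i = b i → A.mulVec x i = b i)} := by
  classical
  subst hP
  obtain ⟨hu_mem, hu_ext⟩ := hu
  obtain ⟨p, hpP, hpu⟩ := hu_mem
  choose xm hxmP hxmu hxmz using fun i => (hz i).1
  have hlb : ∀ i, ∀ q, (∀ j, A.mulVec q j ≤ b j) → W q = u → z i ≤ A.mulVec q i :=
    fun i q hq hqu => (hz i).2 ⟨q, hq, hqu, rfl⟩
  have hzb : ∀ i, z i ≤ b i := fun i => (hxmz i) ▸ hxmP i i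
  ext x
  simp only [Set.mem_inter_iff, Set.mem_setOf_eq]
  constructor
  · rintro ⟨hxu, hxP⟩ i
    exact ⟨fun _ => hxP i, fun h => le_antisymm (hxP i) (h ▸ hlb i x hxP hxu)⟩
  · intro hx
    have hxP : ∀ i, A.mulVec x i ≤ b i := by
      intro i
      rcases lt_or_eq_of_le (hzb i) with h | h
      · exact (hx i).1 h
      · exact le_of_eq ((hx i).2 h)
    refine ⟨?_, hxP⟩
    set M : ℝ := (m : ℝ) + 1 with hM
    have hMpos : (0:ℝ) < M := by positivity
    have hMne : M ≠ 0 := ne_of_gt hMpos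
    set xstar : Fin n → ℝ := M⁻¹ • (p + ∑ j, xm j) with hxstar
    have hWstar : W xstar = u := by
      have h1 : W xstar = M⁻¹ • (W p + ∑ j, W (xm j)) := by
        rw [hxstar, map_smul, map_add, map_sum]
      rw [h1, hpu]
      have h2 : ∑ j : Fin m, W (xm j) = (m : ℝ) • u := by
        simp only [hxmu]
        rw [Finset.sum_const, Finset.card_univ, Fintype.card_fin]
        funext k
        simp [nsmul_eq_mul]
      rw [h2]
      funext k
      simp only [Pi.smul_apply, Pi.add_apply, smul_eq_mul]
      field_simp [hM]
      ring
    have hAstar : ∀ i, A.mulVec xstar i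
        = M⁻¹ * (A.mulVec p i + ∑ j, A.mulVec (xm j) i) := by
      intro i
      have h1 : A.mulVec xstar = M⁻¹ • (A.mulVec p + ∑ j, A.mulVec (xm j)) := by
        rw [hxstar, ← Matrix.mulVecLin_apply, map_smul, map_add, map_sum]
        simp [Matrix.mulVecLin_apply]
      rw [h1]
      simp
    have hstarP : ∀ i, A.mulVec xstar i ≤ b i := by
      intro i
      rw [hAstar]
      have hsum : ∑ j, A.mulVec (xm j) i ≤ (m : ℝ) * b i := by
        calc ∑ j, A.mulVec (xm j) i ≤ ∑ _j : Fin m, b i :=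
              Finset.sum_le_sum fun j _ => hxmP j i
          _ = (m : ℝ) * b i := by
              rw [Finset.sum_const, Finset.card_univ, Fintype.card_fin, nsmul_eq_mul]
      have h1 : A.mulVec p i + ∑ j, A.mulVec (xm j) i ≤ M * b i := by
        rw [hM]; nlinarith [hpP i]
      calc M⁻¹ * (A.mulVec p i + ∑ j, A.mulVec (xm j) i) ≤ M⁻¹ * (M * b i) :=
            mul_le_mul_of_nonneg_left h1 (by positivity)
        _ = b i := by field_simp
    have hstarlt : ∀ i, z i < b i → A.mulVec xstar i < b i := by
      intro i hi
      rw [hAstar]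
      have hsum : ∑ j, A.mulVec (xm j) i < (m : ℝ) * b i := by
        calc ∑ j, A.mulVec (xm j) i < ∑ _j : Fin m, b i := by
              refine Finset.sum_lt_sum (fun j _ => hxmP j i)
                ⟨i, Finset.mem_univ i, ?_⟩
              rw [hxmz i]; exact hi
          _ = (m : ℝ) * b i := by
              rw [Finset.sum_const, Finset.card_univ, Fintype.card_fin, nsmul_eq_mul]
      have h1 : A.mulVec p i + ∑ j, A.mulVec (xm j) i < M * b i := by
        rw [hM]; nlinarith [hpP i]
      calc M⁻¹ * (A.mulVec p i + ∑ j, A.mulVec (xm j) i) < M⁻¹ * (M * b i) :=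
            mul_lt_mul_of_pos_left h1 (by positivity)
        _ = b i := by field_simp
    have hzstar : ∀ i, z i ≤ A.mulVec xstar i := fun i => hlb i xstar hstarP hWstar
    clear_value xstar
    clear hxstar
    -- choose the perturbation size ε
    set g : Fin m → ℝ := fun i =>
      if h : A.mulVec x i < A.mulVec xstar i ∧ z i < b i then
        (b i - A.mulVec xstar i) / (A.mulVec xstar i - A.mulVec x i)
      else 1 with hg
    have hgpos : ∀ i, 0 < g i := by
      intro i
      rw [hg]
      dsimp only
      split_ifs with h
      · exact div_pos (sub_pos.mpr (hstarlt i h.2)) (sub_pos.mpr h.1)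
      · exact one_pos
    set s : Finset ℝ := insert (1:ℝ) (Finset.image g Finset.univ) with hs
    have hsne : s.Nonempty := ⟨1, Finset.mem_insert_self _ _⟩
    set ε : ℝ := s.inf' hsne id with hε
    have hεpos : 0 < ε := by
      rw [hε, Finset.lt_inf'_iff]
      intro r hr
      rcases Finset.mem_insert.mp hr with h | h
      · simp [h]
      · obtain ⟨i, _, rfl⟩ := Finset.mem_image.mp h
        exact hgpos i
    have hεle : ∀ i, ε ≤ g i := fun i =>
      Finset.inf'_le id (Finset.mem_insert_of_mem
        (Finset.mem_image_of_mem g (Finset.mem_univ i)))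
    clear_value ε
    set y : Fin n → ℝ := xstar + ε • (xstar - x) with hy
    have hAy : ∀ i, A.mulVec y i
        = A.mulVec xstar i + ε * (A.mulVec xstar i - A.mulVec x i) := by
      intro i
      rw [hy, Matrix.mulVec_add, Matrix.mulVec_smul, Matrix.mulVec_sub]
      simp
    have hyP : ∀ i, A.mulVec y i ≤ b i := by
      intro i
      rw [hAy]
      rcases lt_or_eq_of_le (hzb i) with h | h
      · by_cases hc : A.mulVec x i < A.mulVec xstar i
        · have hgi : g i = (b i - A.mulVec xstar i) / (A.mulVec xstar i - A.mulVec x i) := by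
            rw [hg]
            exact dif_pos ⟨hc, h⟩
          have h1 : ε ≤ (b i - A.mulVec xstar i) / (A.mulVec xstar i - A.mulVec x i) :=
            hgi ▸ hεle i
          have h2 : ε * (A.mulVec xstar i - A.mulVec x i) ≤ b i - A.mulVec xstar i :=
            (le_div_iff₀ (sub_pos.mpr hc)).mp h1
          linarith
        · push_neg at hc
          nlinarith [hstarlt i h, hεpos]
      · have h1 : A.mulVec x i = b i := (hx i).2 h
        have h2 : A.mulVec xstar i = b i :=
          le_antisymm (hstarP i) (h ▸ hzstar i)
        rw [h1, h2]
        ring_nf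
        exact le_refl _
    have hWy : W y = u + ε • (u - W x) := by
      rw [hy, map_add, map_smul W ε (xstar - x), map_sub W xstar x, hWstar]
    have hne : (1:ℝ) + ε ≠ 0 := by positivity
    have hseg : u ∈ openSegment ℝ (W x) (W y) := by
      refine ⟨ε / (1 + ε), 1 / (1 + ε), by positivity, by positivity, by field_simp; ring, ?_⟩
      rw [hWy]
      funext k
      simp only [Pi.add_apply, Pi.smul_apply, Pi.sub_apply, smul_eq_mul]
      field_simp
      ring
    exact hu_ext ⟨x, hxP, rfl⟩ ⟨y, hyP, rfl⟩ hseg
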